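/- arXiv:1801.01013 — 3 statements merged into one kernel-verified Lean document; each statement's English description precedes it below -/
import Mathlib

section
/- Under the structural model in which the counterfactual cause-specific hazards satisfy $\lambda^j_{T^x}(t\mid X=x,G,L) - \lambda^j_{T^0}(t\mid X=x,G,L) = \beta_j(t)x$ for $j=1,2$, the ratio of counterfactual to factual survival functions satisfies $P(\tilde T^0 > t \mid X,G,L)/P(\tilde T > t \mid X,G,L) = e^{(B_1(t)+B_2(t))X}$, where $B_j(t)=\int_0^t \beta_j(s)\,ds$. -/
open Real MeasureTheory intervalIntegral

/-- Under the structural model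
`λ^j_{T^x}(t | X=x,G,L) - λ^j_{T^0}(t | X=x,G,L) = β_j(t) x` for `j = 1,2`,
the ratio of counterfactual to factual survival functions satisfies
`P(T̃⁰ > t | X,G,L) / P(T̃ > t | X,G,L) = exp((B₁(t)+B₂(t)) X)`,
where survival functions are exponentials of minus the cumulative all-cause hazard,
`B_j(t) = ∫₀ᵗ β_j(s) ds`, and by consistency the factual survival at exposure `X = x`
is the counterfactual survival at level `x`. -/
theorem structural_model_survival_ratio
    (x : ℝ)  -- the (conditioned-on) exposure level X = x
    (lam : ℝ → Fin 2 → ℝ → ℝ)  -- lam y j t : cause-specific hazard λ^j_{T^y}(t | X=x,G,L)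
    (β : Fin 2 → ℝ → ℝ)
    (hlamInt : ∀ y j t, IntervalIntegrable (lam y j) volume 0 t)
    (hβInt : ∀ j t, IntervalIntegrable (β j) volume 0 t)
    -- structural model, at the conditioned-on exposure level x
    (hstruct : ∀ j t, lam x j t - lam 0 j t = β j t * x)
    (B : Fin 2 → ℝ → ℝ)
    (hB : ∀ j t, B j t = ∫ s in (0 : ℝ)..t, β j s)
    (S : ℝ → ℝ → ℝ)  -- S y t = P(T̃^y > t | X=x,G,L); by consistency S x is P(T̃ > t | X,G,L)
    (hS : ∀ y t, S y t = exp (-∫ s in (0 : ℝ)..t, (lam y 0 s + lam y 1 s))) :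
    ∀ t : ℝ, S 0 t / S x t = exp ((B 0 t + B 1 t) * x) := by
  intro t
  rw [hS, hS, ← Real.exp_sub]
  congr 1
  have h0 : ∀ y, ∫ s in (0:ℝ)..t, (lam y 0 s + lam y 1 s)
      = (∫ s in (0:ℝ)..t, lam y 0 s) + ∫ s in (0:ℝ)..t, lam y 1 s := fun y =>
    intervalIntegral.integral_add (hlamInt y 0 t) (hlamInt y 1 t)
  have hd : ∀ j : Fin 2, (∫ s in (0:ℝ)..t, lam x j s) - (∫ s in (0:ℝ)..t, lam 0 j s)
      = B j t * x := by
    intro j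
    rw [← intervalIntegral.integral_sub (hlamInt x j t) (hlamInt 0 j t)]
    simp only [hstruct]
    rw [intervalIntegral.integral_mul_const, hB]
  have := hd 0
  have := hd 1
  rw [h0 x, h0 0]
  ring_nf
  ring_nf at this ⊢
  nlinarith [hd 0, hd 1]
end

section
/- Suppose $E[\lambda^j_{\tilde T^0}(t\mid X,G,L) \cdot w(t)] = \frac{d}{dt} E[w'(t)\, P(\tilde T^0 \le t, \delta^0 = j \mid G,L)]$ where $w(t) = P(C>t\mid L)\{G-E(G\mid L)\} P(\tilde T^0 > t \mid X,G,L)$ and $w'(t) = P(C>t\mid L)\{G-E(G\mid L)\}$. If $G \perp (\tilde T^0,\delta^0)\mid L$, then this expression vanishes for every $t$. -/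
open MeasureTheory

/-- Key exchange step of Proposition 1: suppose
`E[λ^j_{T̃⁰}(t|X,G,L) w(t)] = d/dt E[w'(t) P(T̃⁰ ≤ t, δ⁰ = j | G,L)]` where
`w(t) = P(C>t|L){G-E(G|L)} P(T̃⁰>t|X,G,L)` and `w'(t) = P(C>t|L){G-E(G|L)}`.
If `G ⊥ (T̃⁰,δ⁰) | L`, then this expression vanishes for every `t`. -/
theorem key_exchange_step_vanishes
    {Ω : Type*} [MeasurableSpace Ω] (μ : Measure Ω) [IsProbabilityMeasure μ]
    (G L : Ω → ℝ) (hG : Measurable G) (hL : Measurable L) (hGint : Integrable G μ)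
    (Pc : ℝ → ℝ → ℝ)  -- Pc t l = P(C > t | L = l)
    (hPc : ∀ t, Measurable (Pc t)) (hPc01 : ∀ t l, Pc t l ∈ Set.Icc (0:ℝ) 1)
    (lam0w : ℝ → Ω → ℝ)  -- integrand λ^j_{T̃⁰}(t|X,G,L) ⬝ P(T̃⁰>t|X,G,L), apart from w'
    (q : ℝ → Ω → ℝ)      -- q t = P(T̃⁰ ≤ t, δ⁰ = j | G, L)
    (hq01 : ∀ t ω, q t ω ∈ Set.Icc (0:ℝ) 1)
    -- conditional independence of `G` and `(T̃⁰,δ⁰)` given `L`: the conditional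
    -- probability given `(G,L)` is a (measurable) function of `L` alone
    (hIV : ∀ t, ∃ r : ℝ → ℝ, Measurable r ∧ (fun ω => q t ω) =ᵐ[μ] fun ω => r (L ω))
    -- the hypothesized exchange identity between the expectation and the derivative
    (hexch : ∀ t : ℝ,
      (∫ ω, lam0w t ω * (Pc t (L ω) *
          (G ω - (μ[G | MeasurableSpace.comap L Real.measurableSpace]) ω)) ∂μ)
        = deriv (fun s => ∫ ω, Pc s (L ω) *
            (G ω - (μ[G | MeasurableSpace.comap L Real.measurableSpace]) ω) * q s ω ∂μ) t) :
    ∀ t : ℝ,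
      (∫ ω, lam0w t ω * (Pc t (L ω) *
          (G ω - (μ[G | MeasurableSpace.comap L Real.measurableSpace]) ω)) ∂μ) = 0 := by
  intro t
  have hm : MeasurableSpace.comap L Real.measurableSpace ≤ ‹MeasurableSpace Ω› :=
    hL.comap_le
  have hE : Integrable (μ[G | MeasurableSpace.comap L Real.measurableSpace]) μ := integrable_condExp
  -- The function inside the derivative is identically zero.
  have hzero : (fun s => ∫ ω, Pc s (L ω) * (G ω - (μ[G | MeasurableSpace.comap L Real.measurableSpace]) ω) * q s ω ∂μ)
      = fun _ => (0 : ℝ) := by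
    funext s
    obtain ⟨r, hr, hae⟩ := hIV s
    set f : ℝ → ℝ := fun l => Pc s l * min 1 (max 0 (r l)) with hf_def
    have hf_meas : Measurable f :=
      (hPc s).mul (measurable_const.min (measurable_const.max hr))
    have hf_bdd : ∀ l, |f l| ≤ 1 := by
      intro l
      have h1 := hPc01 s l
      have h2 : (0:ℝ) ≤ min 1 (max 0 (r l)) := le_min (by norm_num) (le_max_left 0 _)
      have h3 : min 1 (max 0 (r l)) ≤ 1 := min_le_left _ _
      rw [abs_of_nonneg (mul_nonneg h1.1 h2)]
      calc Pc s l * min 1 (max 0 (r l)) ≤ 1 * 1 := mul_le_mul h1.2 h3 h2 (by norm_num)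
        _ = 1 := by ring
    -- rewrite the integrand a.e.
    have hcongr : (fun ω => Pc s (L ω) * (G ω - (μ[G | MeasurableSpace.comap L Real.measurableSpace]) ω) * q s ω)
        =ᵐ[μ] fun ω => f (L ω) * G ω - f (L ω) * (μ[G | MeasurableSpace.comap L Real.measurableSpace]) ω := by
      filter_upwards [hae] with ω hω
      have h01 := hq01 s ω
      have : min 1 (max 0 (r (L ω))) = q s ω := by
        rw [← hω, max_eq_right h01.1, min_eq_right h01.2]
      simp only [hf_def, this]; ring
    rw [integral_congr_ae hcongr]
    have hfL_meas : Measurable (fun ω => f (L ω)) := hf_meas.comp hL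
    have hint1 : Integrable (fun ω => f (L ω) * G ω) μ :=
      hGint.bdd_mul hfL_meas.aestronglyMeasurable (c := 1) (Filter.Eventually.of_forall fun ω => hf_bdd (L ω))
    have hint2 : Integrable (fun ω => f (L ω) * (μ[G | MeasurableSpace.comap L Real.measurableSpace]) ω) μ :=
      hE.bdd_mul hfL_meas.aestronglyMeasurable (c := 1) (Filter.Eventually.of_forall fun ω => hf_bdd (L ω))
    rw [integral_sub hint1 hint2]
    -- pull-out property
    have hfL_sm : StronglyMeasurable[MeasurableSpace.comap L Real.measurableSpace] (fun ω => f (L ω)) :=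
      (hf_meas.comp (comap_measurable L)).stronglyMeasurable
    have hpull : μ[(fun ω => f (L ω) * G ω) | MeasurableSpace.comap L Real.measurableSpace]
        =ᵐ[μ] fun ω => f (L ω) * (μ[G | MeasurableSpace.comap L Real.measurableSpace]) ω :=
      condExp_mul_of_stronglyMeasurable_left hfL_sm hint1 hGint
    have : ∫ ω, f (L ω) * G ω ∂μ = ∫ ω, f (L ω) * (μ[G | MeasurableSpace.comap L Real.measurableSpace]) ω ∂μ := by
      rw [← integral_condExp hm, integral_congr_ae hpull]
    rw [this, sub_self]
  rw [hexch t, hzero, deriv_const]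
end

section
/- (Wald-type identity, no covariates.) Assume $G \perp \tilde T^0$ and the survival ratio identity $P(\tilde T^0 > t \mid X, G) = e^{B(t)X} P(\tilde T > t \mid X, G)$ with $B(t) = B_1(t)+B_2(t)$. Then $E[\{G - E(G)\}\, e^{B(t)X}\, I(\tilde T > t)] = 0$ for all $t \ge 0$. -/
open MeasureTheory ProbabilityTheory Real

/-- Wald-type identity with no covariates: if `G ⊥ T̃⁰` and
`P(T̃⁰ > t | X,G) = e^{B(t) X} P(T̃ > t | X,G)`, then
`E[{G - E(G)} e^{B(t) X} I(T̃ > t)] = 0` for all `t ≥ 0`. -/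
theorem wald_identity_no_covariates
    {Ω : Type*} [MeasurableSpace Ω] (μ : Measure Ω) [IsProbabilityMeasure μ]
    (G X Ttil T0 : Ω → ℝ)
    (hG : Measurable G) (hX : Measurable X) (hT : Measurable Ttil) (hT0 : Measurable T0)
    (hGint : Integrable G μ) (hXbd : ∃ cX, ∀ ω, |X ω| ≤ cX)
    -- the instrument is independent of the counterfactual event time under zero exposure
    (hindep : IndepFun G T0 μ)
    (B : ℝ → ℝ)
    -- survival ratio identity: `P(T̃⁰ > t | X,G) = e^{B(t) X} P(T̃ > t | X,G)`
    (hratio : ∀ t : ℝ, 0 ≤ t →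
      μ[Set.indicator {ω | t < T0 ω} (fun _ => (1:ℝ)) |
          MeasurableSpace.comap (fun ω => (X ω, G ω)) inferInstance]
        =ᵐ[μ] fun ω => exp (B t * X ω) *
          (μ[Set.indicator {ω | t < Ttil ω} (fun _ => (1:ℝ)) |
            MeasurableSpace.comap (fun ω => (X ω, G ω)) inferInstance]) ω) :
    ∀ t : ℝ, 0 ≤ t →
      ∫ ω, (G ω - ∫ ω', G ω' ∂μ) * exp (B t * X ω) *
        (Set.indicator {ω | t < Ttil ω} (fun _ => (1:ℝ)) ω) ∂μ = 0 := by
  intro t ht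
  obtain ⟨cX, hcX⟩ := hXbd
  set c : ℝ := ∫ ω', G ω' ∂μ with hc
  have hm : MeasurableSpace.comap (fun ω => (X ω, G ω)) inferInstance
      ≤ ‹MeasurableSpace Ω› := ((hX.prodMk hG)).comap_le
  haveI : SigmaFinite (μ.trim hm) := by infer_instance
  -- indicator functions
  set IT : Ω → ℝ := Set.indicator {ω | t < Ttil ω} (fun _ => (1:ℝ)) with hITdef
  set IT0 : Ω → ℝ := Set.indicator {ω | t < T0 ω} (fun _ => (1:ℝ)) with hIT0def
  have hsetT : MeasurableSet {ω | t < Ttil ω} := measurableSet_lt measurable_const hT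
  have hsetT0 : MeasurableSet {ω | t < T0 ω} := measurableSet_lt measurable_const hT0
  have hITmeas : Measurable IT := (measurable_const.indicator hsetT)
  have hIT0meas : Measurable IT0 := (measurable_const.indicator hsetT0)
  have hITbd : ∀ ω, ‖IT ω‖ ≤ 1 := by
    intro ω; rw [hITdef]
    by_cases h : ω ∈ {ω | t < Ttil ω} <;> simp [Set.indicator_apply, h]
  have hIT0bd : ∀ ω, ‖IT0 ω‖ ≤ 1 := by
    intro ω; rw [hIT0def]
    by_cases h : ω ∈ {ω | t < T0 ω} <;> simp [Set.indicator_apply, h]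
  have hITint : Integrable IT μ := (integrable_const (1:ℝ)).indicator hsetT
  have hIT0int : Integrable IT0 μ := (integrable_const (1:ℝ)).indicator hsetT0
  -- m-measurability of G and exp(B t * X)
  have hGm : Measurable[MeasurableSpace.comap (fun ω => (X ω, G ω)) inferInstance] G := by
    intro s hs
    exact ⟨Prod.snd ⁻¹' s, measurable_snd hs, rfl⟩
  have hXm : Measurable[MeasurableSpace.comap (fun ω => (X ω, G ω)) inferInstance] X := by
    intro s hs
    exact ⟨Prod.fst ⁻¹' s, measurable_fst hs, rfl⟩
  have hEm : Measurable[MeasurableSpace.comap (fun ω => (X ω, G ω)) inferInstance]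
      (fun ω => exp (B t * X ω)) :=
    (Real.measurable_exp.comp (measurable_const.mul hXm))
  have hEbd : ∀ ω, ‖exp (B t * X ω)‖ ≤ exp (|B t| * cX) := by
    intro ω
    rw [Real.norm_eq_abs, abs_of_pos (exp_pos _)]
    apply Real.exp_le_exp.2
    calc B t * X ω ≤ |B t * X ω| := le_abs_self _
      _ = |B t| * |X ω| := abs_mul _ _
      _ ≤ |B t| * cX := mul_le_mul_of_nonneg_left (hcX ω) (abs_nonneg _)
  -- f := (G - c) is m-strongly measurable and integrable
  have hfm : StronglyMeasurable[MeasurableSpace.comap (fun ω => (X ω, G ω)) inferInstance]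
      (fun ω => G ω - c) :=
    ((hGm.sub measurable_const).stronglyMeasurable)
  have hfint : Integrable (fun ω => G ω - c) μ := hGint.sub (integrable_const c)
  have hEmeas : Measurable (fun ω => exp (B t * X ω)) :=
    Real.measurable_exp.comp (measurable_const.mul hX)
  have hprod_int : Integrable (fun ω => (G ω - c) * (exp (B t * X ω) * IT ω)) μ := by
    have h1 : Integrable (fun ω => (exp (B t * X ω) * IT ω) * (G ω - c)) μ :=
      hfint.bdd_mul ((hEmeas.mul hITmeas).aestronglyMeasurable)
        (c := exp (|B t| * cX) * 1) (Filter.Eventually.of_forall fun ω => by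
          rw [norm_mul]
          exact mul_le_mul (hEbd ω) (hITbd ω) (norm_nonneg _) (exp_pos _).le)
    exact h1.congr (Filter.Eventually.of_forall (fun ω => by ring))
  have hfem : StronglyMeasurable[MeasurableSpace.comap (fun ω => (X ω, G ω)) inferInstance]
      (fun ω => (G ω - c) * exp (B t * X ω)) :=
    hfm.mul (hEm.stronglyMeasurable)
  have key1 : μ[(fun ω => (G ω - c) * exp (B t * X ω)) * IT |
        MeasurableSpace.comap (fun ω => (X ω, G ω)) inferInstance]
      =ᵐ[μ] (fun ω => (G ω - c) * exp (B t * X ω)) * μ[IT |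
        MeasurableSpace.comap (fun ω => (X ω, G ω)) inferInstance] := by
    refine condExp_mul_of_stronglyMeasurable_left hfem ?_ hITint
    exact hprod_int.congr (Filter.Eventually.of_forall (fun ω => by simp [mul_assoc]))
  have key2 : μ[(fun ω => G ω - c) * IT0 |
        MeasurableSpace.comap (fun ω => (X ω, G ω)) inferInstance]
      =ᵐ[μ] (fun ω => G ω - c) * μ[IT0 |
        MeasurableSpace.comap (fun ω => (X ω, G ω)) inferInstance] := by
    refine condExp_mul_of_stronglyMeasurable_left hfm ?_ hIT0int
    have := hfint.bdd_mul hIT0meas.aestronglyMeasurable (c := 1) (Filter.Eventually.of_forall hIT0bd)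
    exact this.congr (Filter.Eventually.of_forall (fun ω => by
      simp [Pi.mul_apply, mul_comm]))
  -- main chain of equalities
  have hLHS : ∫ ω, (G ω - c) * exp (B t * X ω) * IT ω ∂μ
      = ∫ ω, (G ω - c) * IT0 ω ∂μ := by
    have e1 : ∫ ω, (G ω - c) * exp (B t * X ω) * IT ω ∂μ
        = ∫ ω, (μ[(fun ω => (G ω - c) * exp (B t * X ω)) * IT |
            MeasurableSpace.comap (fun ω => (X ω, G ω)) inferInstance]) ω ∂μ := by
      rw [integral_condExp hm]
      rfl
    have e2 : ∫ ω, (μ[(fun ω => (G ω - c) * exp (B t * X ω)) * IT |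
            MeasurableSpace.comap (fun ω => (X ω, G ω)) inferInstance]) ω ∂μ
        = ∫ ω, (G ω - c) * (exp (B t * X ω) * (μ[IT |
            MeasurableSpace.comap (fun ω => (X ω, G ω)) inferInstance]) ω) ∂μ := by
      refine integral_congr_ae (key1.mono (fun ω h => ?_))
      simp only [Pi.mul_apply] at h
      rw [h]; ring
    have e3 : ∫ ω, (G ω - c) * (exp (B t * X ω) * (μ[IT |
            MeasurableSpace.comap (fun ω => (X ω, G ω)) inferInstance]) ω) ∂μ
        = ∫ ω, (G ω - c) * (μ[IT0 |
            MeasurableSpace.comap (fun ω => (X ω, G ω)) inferInstance]) ω ∂μ := by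
      refine integral_congr_ae (((hratio t ht).mono (fun ω h => ?_)))
      simp only [← hITdef, ← hIT0def] at h
      simp only [h]
    have e4 : ∫ ω, (G ω - c) * (μ[IT0 |
            MeasurableSpace.comap (fun ω => (X ω, G ω)) inferInstance]) ω ∂μ
        = ∫ ω, (μ[(fun ω => G ω - c) * IT0 |
            MeasurableSpace.comap (fun ω => (X ω, G ω)) inferInstance]) ω ∂μ := by
      refine (integral_congr_ae (key2.mono (fun ω h => ?_))).symm
      simp only [Pi.mul_apply] at h
      rw [h]
    have e5 : ∫ ω, (μ[(fun ω => G ω - c) * IT0 |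
            MeasurableSpace.comap (fun ω => (X ω, G ω)) inferInstance]) ω ∂μ
        = ∫ ω, (G ω - c) * IT0 ω ∂μ := by
      rw [integral_condExp hm]
      rfl
    rw [e1, e2, e3, e4, e5]
  -- independence: ∫ G * IT0 = (∫ G) * (∫ IT0)
  have hindep2 : IndepFun G IT0 μ := by
    have h : IT0 = (fun s : ℝ => Set.indicator {s : ℝ | t < s} (fun _ => (1:ℝ)) s) ∘ T0 := by
      funext ω
      simp [hIT0def, Set.indicator_apply]
    rw [h]
    exact hindep.comp measurable_id
      (measurable_const.indicator (measurableSet_lt measurable_const measurable_id))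
  have hGIT0int : Integrable (fun ω => G ω * IT0 ω) μ := by
    have := hGint.bdd_mul hIT0meas.aestronglyMeasurable (c := 1) (Filter.Eventually.of_forall hIT0bd)
    exact this.congr (Filter.Eventually.of_forall (fun ω => mul_comm _ _))
  have hmul : ∫ ω, G ω * IT0 ω ∂μ = (∫ ω, G ω ∂μ) * ∫ ω, IT0 ω ∂μ :=
    hindep2.integral_mul_eq_mul_integral hGint.aestronglyMeasurable hIT0int.aestronglyMeasurable
  -- finish
  rw [hLHS]
  have hsplit : ∫ ω, (G ω - c) * IT0 ω ∂μ
      = ∫ ω, G ω * IT0 ω ∂μ - c * ∫ ω, IT0 ω ∂μ := by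
    rw [← integral_const_mul, ← integral_sub hGIT0int (hIT0int.const_mul c)]
    congr 1; funext ω; ring
  rw [hsplit, hmul, ← hc]
  ring
end
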